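/- The birational morphism η : X₁ → X₀, (x,y,z₁,z₂,w) ↦ (x, y, xz₁, yz₁ + 1, w), is well defined (the defining equations of X₀ pull back into the ideal of X₁) and is equivariant for the 𝔾ₐ-actions given by the locally nilpotent derivations ∂₁ = x∂_{z₁} + (2yz₁+1)∂_{z₂} + y²∂_w on X₁ and ∂₀ = x²∂_p + xy∂_q + y²∂_r on X₀; that is, ∂₁ ∘ η* = η* ∘ ∂₀ on the coordinate ring of X₀. -/
import Mathlib


open MvPolynomial

/-- Coordinates on `𝔸⁵`.  For `X₀`: `x = X 0`, `y = X 1`, `p = X 2`, `q = X 3`,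
`r = X 4`.  For `X₁`: `x = X 0`, `y = X 1`, `z₁ = X 2`, `z₂ = X 3`, `w = X 4`. -/
noncomputable abbrev R5 : Type := MvPolynomial (Fin 5) ℂ

/-- `η* : ℂ[x,y,p,q,r] → ℂ[x,y,z₁,z₂,w]`, `p ↦ xz₁`, `q ↦ yz₁ + 1`, `r ↦ w`,
fixing `x, y`; the co-morphism of `η : X₁ → X₀`,
`(x,y,z₁,z₂,w) ↦ (x, y, xz₁, yz₁+1, w)`. -/
noncomputable def ηstar : R5 →ₐ[ℂ] R5 :=
  MvPolynomial.aeval ![X 0, X 1, X 0 * X 2, X 1 * X 2 + 1, X 4]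

/-- `∂₀ = x²∂_p + xy∂_q + y²∂_r`. -/
noncomputable def D₀ : Derivation ℂ R5 R5 :=
  MvPolynomial.mkDerivation ℂ
    (fun i => if i = 2 then (X 0) ^ 2
              else if i = 3 then X 0 * X 1
              else if i = 4 then (X 1) ^ 2 else 0)

/-- `∂₁ = x∂_{z₁} + (2yz₁+1)∂_{z₂} + y²∂_w`. -/
noncomputable def D₁ : Derivation ℂ R5 R5 :=
  MvPolynomial.mkDerivation ℂ
    (fun i => if i = 2 then X 0
              else if i = 3 then 2 * X 1 * X 2 + 1
              else if i = 4 then (X 1) ^ 2 else 0)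

/-- The birational morphism `η : X₁ → X₀`, `(x,y,z₁,z₂,w) ↦ (x,y,xz₁,yz₁+1,w)`, is well
defined — the defining equations `xr - yq`, `yp - x(q-1)`, `pr - q(q-1)` of `X₀` pull
back under `η*` into the ideal `(xw - y(yz₁+1), xz₂ - z₁(yz₁+1), z₁w - yz₂)` of `X₁` —
and is equivariant for the `𝔾ₐ`-actions given by `∂₁` and `∂₀`:
`∂₁ ∘ η* = η* ∘ ∂₀`. -/
theorem stmt_19 :
    (ηstar (X 0 * X 4 - X 1 * X 3) ∈
      Ideal.span {(X 0 * X 4 - X 1 * (X 1 * X 2 + 1) : R5),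
        X 0 * X 3 - X 2 * (X 1 * X 2 + 1), X 2 * X 4 - X 1 * X 3}) ∧
    (ηstar (X 1 * X 2 - X 0 * (X 3 - 1)) ∈
      Ideal.span {(X 0 * X 4 - X 1 * (X 1 * X 2 + 1) : R5),
        X 0 * X 3 - X 2 * (X 1 * X 2 + 1), X 2 * X 4 - X 1 * X 3}) ∧
    (ηstar (X 2 * X 4 - X 3 * (X 3 - 1)) ∈
      Ideal.span {(X 0 * X 4 - X 1 * (X 1 * X 2 + 1) : R5),
        X 0 * X 3 - X 2 * (X 1 * X 2 + 1), X 2 * X 4 - X 1 * X 3}) ∧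
    ∀ g : R5, D₁ (ηstar g) = ηstar (D₀ g) := by
  refine ⟨?_, ?_, ?_, ?_⟩
  · have h : ηstar (X 0 * X 4 - X 1 * X 3) =
        (X 0 * X 4 - X 1 * (X 1 * X 2 + 1) : R5) := by
      simp [ηstar]
    rw [h]
    exact Ideal.subset_span (by simp)
  · have h : ηstar (X 1 * X 2 - X 0 * (X 3 - 1)) = (0 : R5) := by
      simp [ηstar]; ring
    rw [h]
    exact Ideal.zero_mem _
  · have h : ηstar (X 2 * X 4 - X 3 * (X 3 - 1)) =
        X 1 * (X 0 * X 3 - X 2 * (X 1 * X 2 + 1)) +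
          X 0 * (X 2 * X 4 - X 1 * X 3) := by
      simp [ηstar]; ring
    rw [h]
    exact Ideal.add_mem _
      (Ideal.mul_mem_left _ _ (Ideal.subset_span (by simp)))
      (Ideal.mul_mem_left _ _ (Ideal.subset_span (by simp)))
  · have hX : ∀ i : Fin 5, D₁ (ηstar (X i)) = ηstar (D₀ (X i)) := by
      intro i
      fin_cases i <;>
        simp [ηstar, D₀, D₁, mkDerivation_X] <;> ring
    intro g
    induction g using MvPolynomial.induction_on with
    | C a => simp
    | add p q hp hq => simp [hp, hq]
    | mul_X p i hp =>
      simp only [map_mul, Derivation.leibniz, smul_eq_mul, map_add, hp, hX]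
      try ring
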